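/- Let K be a positive natural number, let w̲, w̄, F : Fin K → ℝ and q, α, g ∈ ℝ. Define h : Fin K → ℝ by h(k) = q·w̲(k) + (1 − q)·w̄(k). Assume ∑ₖ w̲(k) = 1, ∑ₖ w̄(k) = 1, ∑ₖ h(k)² ≠ 0, and ∑ₖ F(k)·(w̲(k) − w̄(k)) ≠ 0. Define Ḟ(k) = −(h(k)/∑ⱼ h(j)²)·α·g, q̇ = −α·g/∑ₖ F(k)·(w̲(k) − w̄(k)), and ẇ̲(k) = −w̲(k)·(4·α·g) + w̲(k)·(∑ⱼ w̲(j))·(4·α·g), ẇ̄(k) = −w̄(k)·(4·α·g) + w̄(k)·(∑ⱼ w̄(j))·(4·α·g). Then q·∑ₖ(Ḟ(k)·w̲(k) + F(k)·ẇ̲(k)) + (1 − q)·∑ₖ(Ḟ(k)·w̄(k) + F(k)·ẇ̄(k)) + q̇·∑ₖ F(k)·(w̲(k) − w̄(k)) = −2·α·g. -/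

import Mathlib

/-- Appendix computation τ̇_n = −2α·sgn(s) for the T2NFS output
τ_n = q∑F·w̲ + (1−q)∑F·w̄ under the SMC theory-based adaptation rules. -/
theorem stmt_11 (K : ℕ) (hK : 0 < K) (wl wu F : Fin K → ℝ) (q α g : ℝ)
    (h : Fin K → ℝ) (hh : ∀ k, h k = q * wl k + (1 - q) * wu k)
    (hwl : ∑ k, wl k = 1) (hwu : ∑ k, wu k = 1)
    (hh2 : ∑ k, (h k) ^ 2 ≠ 0)
    (hF : ∑ k, F k * (wl k - wu k) ≠ 0)
    (F' : Fin K → ℝ) (hF' : ∀ k, F' k = -(h k / ∑ j, (h j) ^ 2) * α * g)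
    (q' : ℝ) (hq' : q' = -(α * g) / ∑ k, F k * (wl k - wu k))
    (wl' wu' : Fin K → ℝ)
    (hwl' : ∀ k, wl' k = -wl k * (4 * α * g) + wl k * (∑ j, wl j) * (4 * α * g))
    (hwu' : ∀ k, wu' k = -wu k * (4 * α * g) + wu k * (∑ j, wu j) * (4 * α * g)) :
    q * (∑ k, (F' k * wl k + F k * wl' k)) +
      (1 - q) * (∑ k, (F' k * wu k + F k * wu' k)) +
      q' * ∑ k, F k * (wl k - wu k) = -2 * α * g := by
  have hwl0 : ∀ k, wl' k = 0 := by intro k; rw [hwl' k, hwl]; ring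
  have hwu0 : ∀ k, wu' k = 0 := by intro k; rw [hwu' k, hwu]; ring
  have hS : ∑ j, (h j) ^ 2 ≠ 0 := hh2
  have h1 : q * (∑ k, (F' k * wl k + F k * wl' k)) +
      (1 - q) * (∑ k, (F' k * wu k + F k * wu' k)) = ∑ k, F' k * h k := by
    simp only [hwl0, hwu0, mul_zero, add_zero, Finset.mul_sum]
    rw [← Finset.sum_add_distrib]
    apply Finset.sum_congr rfl
    intro k _
    rw [hh k]; ring
  rw [h1, hq']
  have h2 : ∑ k, F' k * h k = -α * g := by
    have : ∑ k, F' k * h k = (-α * g / ∑ j, (h j) ^ 2) * ∑ j, (h j) ^ 2 := by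
      rw [Finset.mul_sum]
      apply Finset.sum_congr rfl
      intro k _
      rw [hF' k]; field_simp
    rw [this, div_mul_cancel₀ _ hS]
  rw [h2, div_mul_cancel₀ _ hF]
  ring
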